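/- arXiv:1805.08898 — 4 statements merged into one kernel-verified Lean document; each statement's English description precedes it below -/
import Mathlib

section
/- Let E be a real vector space, S ⊆ E a convex set, and let f, g : E → ℝ be affine functions (each of the form a real-linear map plus a real constant) such that f(x) ≥ 0 and g(x) ≥ 0 for every x ∈ S. Then the product function x ↦ f(x)·g(x) is quasiconcave on S, i.e., for every b ∈ ℝ the superlevel set {x ∈ S : f(x)·g(x) ≥ b} is convex. -/
/-- The product of two nonnegative affine functions is quasiconcave on a convex set:
every superlevel set is convex. -/
theorem stmt_0 {E : Type*} [AddCommGroup E] [Module ℝ E]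
    (S : Set E) (hS : Convex ℝ S)
    (f g : E → ℝ) (Lf Lg : E →ₗ[ℝ] ℝ) (cf cg : ℝ)
    (hfa : ∀ x, f x = Lf x + cf) (hga : ∀ x, g x = Lg x + cg)
    (hf0 : ∀ x ∈ S, 0 ≤ f x) (hg0 : ∀ x ∈ S, 0 ≤ g x) :
    ∀ b : ℝ, Convex ℝ {x | x ∈ S ∧ b ≤ f x * g x} := by
  intro b
  intro x hx y hy a c ha hc hac
  have hzS : a • x + c • y ∈ S := hS hx.1 hy.1 ha hc hac
  refine ⟨hzS, ?_⟩
  have hfz : f (a • x + c • y) = a * f x + c * f y := by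
    simp only [hfa, map_add, map_smul, smul_eq_mul]
    linear_combination (-cf) * hac
  have hgz : g (a • x + c • y) = a * g x + c * g y := by
    simp only [hga, map_add, map_smul, smul_eq_mul]
    linear_combination (-cg) * hac
  rw [hfz, hgz]
  have hfx := hf0 x hx.1
  have hfy := hf0 y hy.1
  have hgx := hg0 x hx.1
  have hgy := hg0 y hy.1
  have h1 := hx.2
  have h2 := hy.2
  rcases le_or_gt b 0 with hb | hb
  · exact le_trans hb (mul_nonneg (by positivity) (by positivity))
  · have key : 2 * b ≤ f x * g y + f y * g x := by
      nlinarith [sq_nonneg (f x * g y - f y * g x), mul_nonneg hfx hgy, mul_nonneg hfy hgx,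
        mul_le_mul h1 h2 (le_of_lt hb) (le_trans (le_of_lt hb) h1)]
    have hc1 : c = 1 - a := by linarith
    subst hc1
    nlinarith [mul_le_mul_of_nonneg_left key (mul_nonneg ha hc),
      mul_le_mul_of_nonneg_left h1 (mul_nonneg ha ha),
      mul_le_mul_of_nonneg_left h2 (mul_nonneg hc hc)]
end

section
/- Fix positive integers N, K, an index k ∈ {1,…,K}, a channel vector h_k ∈ ℂ^N, a constant σ_{a,k}² > 0, and a target value P̂ ≥ 0. Then the set {(ρ, F) ∈ ℝ × (ℂ^{N×N})^K : 0 ≤ ρ ≤ 1, every F_j is positive semidefinite, and (1 − ρ)·(Σ_{j=1}^K Re(h_k^H F_j h_k) + σ_{a,k}²) ≥ P̂} is a convex subset of the real vector space ℝ × (ℂ^{N×N})^K. -/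
open Matrix ComplexOrder

lemma psd_smul_real {N : ℕ} (a : ℝ) (ha : 0 ≤ a) {M : Matrix (Fin N) (Fin N) ℂ}
    (hM : M.PosSemidef) : (a • M).PosSemidef := by
  rw [posSemidef_iff_dotProduct_mulVec]
  constructor
  · unfold Matrix.IsHermitian
    rw [conjTranspose_smul, hM.1.eq, star_trivial]
  · intro x
    have := hM.dotProduct_mulVec_nonneg x
    rw [smul_mulVec, dotProduct_smul]
    exact smul_nonneg ha this

lemma re_nonneg_of_psd {N : ℕ} {M : Matrix (Fin N) (Fin N) ℂ} (hM : M.PosSemidef)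
    (h : Fin N → ℂ) : 0 ≤ (star h ⬝ᵥ (M *ᵥ h)).re := by
  have := hM.dotProduct_mulVec_nonneg h
  rw [Complex.le_def] at this
  simpa using this.1

/-- Convexity of the energy-harvesting constraint set (C10) of problem OP4:
`{(ρ,F) : 0 ≤ ρ ≤ 1, Fⱼ ⪰ 0, (1-ρ)(∑ⱼ Re(hᵏᴴ Fⱼ hᵏ) + σ²) ≥ P̂}` is convex. -/
theorem stmt_2 (N K : ℕ) (hN : 0 < N) (hK : 0 < K) (k : Fin K)
    (h : Fin N → ℂ) (σa2 : ℝ) (hσ : 0 < σa2) (Phat : ℝ) (hPhat : 0 ≤ Phat) :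
    Convex ℝ {p : ℝ × (Fin K → Matrix (Fin N) (Fin N) ℂ) |
        (0 ≤ p.1 ∧ p.1 ≤ 1) ∧ (∀ j, (p.2 j).PosSemidef) ∧
        Phat ≤ (1 - p.1) * ((∑ j, (star h ⬝ᵥ (p.2 j *ᵥ h)).re) + σa2)} := by
  rintro ⟨ρ₁, F₁⟩ ⟨⟨hρ₁0, hρ₁1⟩, hP₁, hE₁⟩ ⟨ρ₂, F₂⟩ ⟨⟨hρ₂0, hρ₂1⟩, hP₂, hE₂⟩ a b ha hb hab
  simp only [Set.mem_setOf_eq, Prod.fst_add, Prod.smul_fst, Prod.snd_add, Prod.smul_snd,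
    Pi.add_apply, Pi.smul_apply, smul_eq_mul] at *
  refine ⟨⟨by nlinarith, by nlinarith⟩, fun j => (psd_smul_real a ha (hP₁ j)).add
      (psd_smul_real b hb (hP₂ j)), ?_⟩
  have hlin : ∀ j, (star h ⬝ᵥ ((a • F₁ j + b • F₂ j) *ᵥ h)).re
      = a * (star h ⬝ᵥ (F₁ j *ᵥ h)).re + b * (star h ⬝ᵥ (F₂ j *ᵥ h)).re := by
    intro j
    simp [add_mulVec, smul_mulVec, dotProduct_add, dotProduct_smul, Complex.smul_re]
  simp only [hlin]
  rw [Finset.sum_add_distrib, ← Finset.mul_sum, ← Finset.mul_sum]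
  set u₁ := ∑ j, (star h ⬝ᵥ (F₁ j *ᵥ h)).re with hu₁
  set u₂ := ∑ j, (star h ⬝ᵥ (F₂ j *ᵥ h)).re with hu₂
  have h1 : 0 ≤ u₁ := Finset.sum_nonneg fun j _ => re_nonneg_of_psd (hP₁ j) h
  have h2 : 0 ≤ u₂ := Finset.sum_nonneg fun j _ => re_nonneg_of_psd (hP₂ j) h
  have hw1 : (0:ℝ) ≤ u₁ + σa2 := by linarith
  have hw2 : (0:ℝ) ≤ u₂ + σa2 := by linarith
  have hv1 : (0:ℝ) ≤ 1 - ρ₁ := by linarith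
  have hv2 : (0:ℝ) ≤ 1 - ρ₂ := by linarith
  have hx : (0:ℝ) ≤ (1 - ρ₁) * (u₂ + σa2) := mul_nonneg hv1 hw2
  have hy : (0:ℝ) ≤ (1 - ρ₂) * (u₁ + σa2) := mul_nonneg hv2 hw1
  have hxy : Phat * Phat ≤ ((1 - ρ₁) * (u₂ + σa2)) * ((1 - ρ₂) * (u₁ + σa2)) := by
    have := mul_le_mul hE₁ hE₂ hPhat (mul_nonneg hv1 hw1)
    nlinarith [this]
  have key : 2 * Phat ≤ (1 - ρ₁) * (u₂ + σa2) + (1 - ρ₂) * (u₁ + σa2) := by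
    nlinarith [sq_nonneg ((1 - ρ₁) * (u₂ + σa2) - (1 - ρ₂) * (u₁ + σa2)), hxy, hx, hy, hPhat]
  have hb' : b = 1 - a := by linarith
  subst hb'
  nlinarith [key, mul_nonneg ha hb, sq_nonneg a, hE₁, hE₂,
    mul_nonneg (mul_nonneg ha ha) (sub_nonneg.2 hE₁),
    mul_nonneg (mul_nonneg hb hb) (sub_nonneg.2 hE₂),
    mul_nonneg (mul_nonneg ha hb) (sub_nonneg.2 key)]
end

section
/- Fix positive integers N, K, channel vectors h_k ∈ ℂ^N, constants σ_{a,k}² > 0, σ_{d,k}² > 0, SINR thresholds γ̄_k > 0, and a power budget P_T > 0 (k ∈ {1,…,K}). Let f^I_1,…,f^I_K ∈ ℂ^N satisfy the pure-ID SINR constraints |h_k^H f^I_k|² ≥ γ̄_k·(Σ_{j≠k} |h_k^H f^I_j|² + σ_{a,k}² + σ_{d,k}²) for all k, and suppose S := Σ_{k=1}^K ‖f^I_k‖² satisfies 0 < S ≤ P_T. Define f_k := √(P_T/S)·f^I_k and ρ_k := S/P_T for each k, and P_I := min_{1≤k≤K} (1 − S/P_T)·(Σ_{j=1}^K |h_k^H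 f^I_j|² + σ_{a,k}²). Then: (i) Σ_{k=1}^K ‖f_k‖² = P_T; (ii) 0 < ρ_k ≤ 1 for all k; (iii) for all k, ρ_k·|h_k^H f_k|² ≥ γ̄_k·(ρ_k·Σ_{j≠k} |h_k^H f_j|² + ρ_k·σ_{a,k}² + σ_{d,k}²); and (iv) for all k, (1 − ρ_k)·(Σ_{j=1}^K |h_k^H f_j|² + σ_{a,k}²) ≥ P_I. -/
open Matrix

/-- Lower-bound construction of Section VI-A2: scaling SINR-feasible pure-ID
precoders `fᴵₖ` to the full budget `P_T` and splitting a `S/P_T` fraction of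
received power for decoding gives a feasible point of OP with minimum received
RF power for EH at least `P_I`. -/
theorem stmt_10 (N K : ℕ) (hN : 0 < N) (hK : 1 ≤ K)
    (h : Fin K → Fin N → ℂ) (σa2 σd2 γ : Fin K → ℝ) (PT : ℝ)
    (hσa : ∀ k, 0 < σa2 k) (hσd : ∀ k, 0 < σd2 k) (hγ : ∀ k, 0 < γ k) (hPT : 0 < PT)
    (fI : Fin K → Fin N → ℂ)
    (hSINR : ∀ k,
      γ k * ((∑ j ∈ Finset.univ.erase k, ‖star (h k) ⬝ᵥ fI j‖ ^ 2)
          + σa2 k + σd2 k)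
        ≤ ‖star (h k) ⬝ᵥ fI k‖ ^ 2)
    (S : ℝ) (hSdefS : S = ∑ k, ∑ i, ‖fI k i‖ ^ 2)
    (hS0 : 0 < S) (hSP : S ≤ PT)
    (f : Fin K → Fin N → ℂ)
    (hf : ∀ k, f k = fun i => (Real.sqrt (PT / S) : ℂ) * fI k i)
    (ρ : Fin K → ℝ) (hρ : ∀ k, ρ k = S / PT)
    (PI : ℝ)
    (hPI : PI = Finset.univ.inf' ⟨⟨0, hK⟩, Finset.mem_univ _⟩
      (fun k => (1 - S / PT) * ((∑ j, ‖star (h k) ⬝ᵥ fI j‖ ^ 2) + σa2 k))) :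
    (∑ k, ∑ i, ‖f k i‖ ^ 2) = PT ∧
    (∀ k, 0 < ρ k ∧ ρ k ≤ 1) ∧
    (∀ k, γ k * (ρ k * (∑ j ∈ Finset.univ.erase k, ‖star (h k) ⬝ᵥ f j‖ ^ 2)
        + ρ k * σa2 k + σd2 k) ≤ ρ k * ‖star (h k) ⬝ᵥ f k‖ ^ 2) ∧
    (∀ k, PI ≤ (1 - ρ k) * ((∑ j, ‖star (h k) ⬝ᵥ f j‖ ^ 2) + σa2 k)) := by
  set c : ℝ := PT / S with hc
  have hc0 : 0 < c := div_pos hPT hS0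
  have hc1 : 1 ≤ c := (one_le_div hS0).2 hSP
  have hsq : Real.sqrt c ^ 2 = c := Real.sq_sqrt hc0.le
  have habs : ∀ k j, ‖star (h k) ⬝ᵥ f j‖ ^ 2
      = c * ‖star (h k) ⬝ᵥ fI j‖ ^ 2 := by
    intro k j
    rw [hf j]
    have : (star (h k) ⬝ᵥ fun i => (Real.sqrt c : ℂ) * fI j i)
        = (Real.sqrt c : ℂ) * (star (h k) ⬝ᵥ fI j) := by
      simp only [dotProduct, Finset.mul_sum, Pi.star_apply]
      exact Finset.sum_congr rfl fun i _ => by ring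
    rw [this, norm_mul, mul_pow, Complex.norm_real,
      Real.norm_of_nonneg (Real.sqrt_nonneg c), hsq]
  have habsf : ∀ k i, ‖f k i‖ ^ 2 = c * ‖fI k i‖ ^ 2 := by
    intro k i
    rw [hf k]
    simp only [norm_mul, mul_pow, Complex.norm_real,
      Real.norm_of_nonneg (Real.sqrt_nonneg c), hsq]
  have hρc : ∀ k, ρ k * c = 1 := by
    intro k; rw [hρ k, hc]
    field_simp
  have hρpos : ∀ k, 0 < ρ k := fun k => by rw [hρ k]; exact div_pos hS0 hPT
  have hρle : ∀ k, ρ k ≤ 1 := fun k => by rw [hρ k]; exact (div_le_one hPT).2 hSP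
  refine ⟨?_, fun k => ⟨hρpos k, hρle k⟩, ?_, ?_⟩
  · have : (∑ k, ∑ i, ‖f k i‖ ^ 2) = c * S := by
      rw [hSdefS, Finset.mul_sum]
      exact Finset.sum_congr rfl fun k _ => by
        rw [Finset.mul_sum]; exact Finset.sum_congr rfl fun i _ => habsf k i
    rw [this, hc]
    field_simp
  · intro k
    have key := hSINR k
    have h1 : ρ k * ‖star (h k) ⬝ᵥ f k‖ ^ 2
        = ‖star (h k) ⬝ᵥ fI k‖ ^ 2 := by
      rw [habs, ← mul_assoc, hρc, one_mul]
    have h2 : ρ k * (∑ j ∈ Finset.univ.erase k, ‖star (h k) ⬝ᵥ f j‖ ^ 2)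
        = ∑ j ∈ Finset.univ.erase k, ‖star (h k) ⬝ᵥ fI j‖ ^ 2 := by
      rw [Finset.mul_sum]
      refine Finset.sum_congr rfl fun j _ => ?_
      rw [habs, ← mul_assoc, hρc, one_mul]
    rw [h1, h2]
    refine le_trans (mul_le_mul_of_nonneg_left ?_ (hγ k).le) key
    have : ρ k * σa2 k ≤ σa2 k := by
      nlinarith [hσa k, hρle k, hρpos k]
    linarith
  · intro k
    rw [hPI, hρ k]
    refine le_trans (Finset.inf'_le _ (Finset.mem_univ k)) ?_
    have hsum : (∑ j, ‖star (h k) ⬝ᵥ fI j‖ ^ 2)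
        ≤ ∑ j, ‖star (h k) ⬝ᵥ f j‖ ^ 2 := by
      refine Finset.sum_le_sum fun j _ => ?_
      rw [habs]
      nlinarith [sq_nonneg (‖star (h k) ⬝ᵥ fI j‖)]
    have h1S : 0 ≤ 1 - S / PT := by
      have := (div_le_one hPT).2 hSP; linarith
    exact mul_le_mul_of_nonneg_left (by linarith) h1S
end

section
/- Fix a positive integer K, nonnegative reals G_{kj} for k,j ∈ {1,…,K} (effective channel gains), constants σ_{a,k}² > 0, σ_{d,k}² > 0, SINR thresholds γ̄_k > 0, a power budget P_T > 0, powers p_1,…,p_K ≥ 0 with 0 < Σ_{j=1}^K p_j ≤ P_T, and power-splitting ratios ρ_k ∈ (0,1). Suppose that for all k: p_k·G_{kk}/γ̄_k − Σ_{j≠k} p_j·G_{kj} ≥ σ_{a,k}² + σ_{d,k}²/ρ_k. Let t := P_T/(Σ_{j=1}^K p_j) ≥ 1. Then the scaled powers t·p_1,…,t·p_K satisfy Σ_{j=1}^K t·p_j = P_T, satisfy the same SINR constraints for all k, and satisfy (1 − ρ_k)·(Σ_{j=1}^K t·p_j·G_{kj} + σ_{a,k}²) ≥ (1 − ρ_k)·(Σ_{j=1}^K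 p_j·G_{kj} + σ_{a,k}²) for all k. -/
/-- Tightness of the total power constraint in OP5: scaling all powers by
`t = P_T / ∑ⱼ pⱼ ≥ 1` uses the full budget, preserves the SINR constraints and
does not decrease any received RF power for energy harvesting. -/
theorem stmt_12 (K : ℕ) (hK : 0 < K)
    (G : Fin K → Fin K → ℝ) (hG : ∀ k j, 0 ≤ G k j)
    (σa2 σd2 γ : Fin K → ℝ)
    (hσa : ∀ k, 0 < σa2 k) (hσd : ∀ k, 0 < σd2 k) (hγ : ∀ k, 0 < γ k)
    (PT : ℝ) (hPT : 0 < PT)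
    (p : Fin K → ℝ) (hp : ∀ k, 0 ≤ p k)
    (hpsum0 : 0 < ∑ j, p j) (hpsum : (∑ j, p j) ≤ PT)
    (ρ : Fin K → ℝ) (hρ : ∀ k, ρ k ∈ Set.Ioo (0:ℝ) 1)
    (hSINR : ∀ k, σa2 k + σd2 k / ρ k ≤
      p k * G k k / γ k - ∑ j ∈ Finset.univ.erase k, p j * G k j)
    (t : ℝ) (ht : t = PT / ∑ j, p j) :
    1 ≤ t ∧
    (∑ j, t * p j) = PT ∧
    (∀ k, σa2 k + σd2 k / ρ k ≤
      t * p k * G k k / γ k - ∑ j ∈ Finset.univ.erase k, t * p j * G k j) ∧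
    (∀ k, (1 - ρ k) * ((∑ j, p j * G k j) + σa2 k)
        ≤ (1 - ρ k) * ((∑ j, t * p j * G k j) + σa2 k)) := by
  have ht1 : 1 ≤ t := by
    rw [ht, le_div_iff₀ hpsum0]; linarith
  refine ⟨ht1, ?_, ?_, ?_⟩
  · rw [← Finset.mul_sum, ht, div_mul_cancel₀ _ (ne_of_gt hpsum0)]
  · intro k
    have hc : 0 < σa2 k + σd2 k / ρ k :=
      add_pos (hσa k) (div_pos (hσd k) (hρ k).1)
    have hscale : t * p k * G k k / γ k
        - ∑ j ∈ Finset.univ.erase k, t * p j * G k j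
        = t * (p k * G k k / γ k - ∑ j ∈ Finset.univ.erase k, p j * G k j) := by
      rw [mul_sub, Finset.mul_sum]
      congr 1
      · ring
      · exact Finset.sum_congr rfl fun j _ => by ring
    rw [hscale]
    calc σa2 k + σd2 k / ρ k ≤ p k * G k k / γ k - ∑ j ∈ Finset.univ.erase k, p j * G k j := hSINR k
      _ = 1 * _ := (one_mul _).symm
      _ ≤ t * _ := by
          apply mul_le_mul_of_nonneg_right ht1
          linarith [hSINR k]
  · intro k
    apply mul_le_mul_of_nonneg_left _ (by linarith [(hρ k).2])
    have : (∑ j, p j * G k j) ≤ ∑ j, t * p j * G k j := by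
      apply Finset.sum_le_sum
      intro j _
      nlinarith [mul_nonneg (hp j) (hG k j)]
    linarith
end
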